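/- Let n be a positive integer not divisible by 4, let c = (1 2 … n) be an n-cycle in S_n, and let H = ⟨c⟩ be the cyclic subgroup of order n it generates. Then for every g ∈ S_n and every irreducible complex character χ of S(g) = H ∩ gHg⁻¹, the indicator ν₂(g,χ) equals 0 or 1. (Equivalently: every simple object of C(S_n, C_n) has Frobenius–Schur indicator 0 or 1.) -/

import Mathlib

open scoped BigOperators Pointwise Classical
open CategoryTheory

/-- For `H ≤ G` and `g ∈ G`, the stabilizer `S(g) = Stab_H(gH) = H ∩ gHg⁻¹`. -/
def stabCoset {G : Type*} [Group G] (H : Subgroup G) (g : G) : Subgroup G :=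
  H ⊓ Subgroup.map (MulAut.conj g).toMonoidHom H

/-- The `m`-th Frobenius–Schur indicator `ν_m(g,χ)` of the simple object of the
group-theoretical fusion category `C(G,H)` attached to `(g,χ)`:
`ν_m(g,χ) = (1/|S(g)|) Σ_{x ∈ H, (gx)^m ∈ H} conj(χ((gx)^m))`
(recall that for `x ∈ H`, `(gx)^m ∈ H` iff `(gx)^m ∈ S(g)`). -/
noncomputable def nuInd {G : Type*} [Group G] (H : Subgroup G) (g : G) (m : ℕ)
    (χ : ↥(stabCoset H g) → ℂ) : ℂ :=
  (Nat.card ↥(stabCoset H g) : ℂ)⁻¹ *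
    ∑ᶠ x : G, if h : x ∈ H ∧ (g * x) ^ m ∈ stabCoset H g
      then (starRingEnd ℂ) (χ ⟨(g * x) ^ m, h.2⟩) else 0

/-- The classical second Frobenius–Schur indicator `ν₂(θ) = (1/|K|) Σ_{x∈K} θ(x²)`. -/
noncomputable def fsInd {K : Type*} [Group K] (θ : K → ℂ) : ℂ :=
  (Nat.card K : ℂ)⁻¹ * ∑ᶠ x : K, θ (x ^ 2)

section Aux

/-- morphism version of the action of a central element -/
noncomputable def myEndo {S : Type} [Group S] (hc : ∀ a b : S, a * b = b * a)
    (V : FDRep ℂ S) (s : S) : V ⟶ V :=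
  ⟨FGModuleCat.ofHom (V.ρ s), fun t => FGModuleCat.hom_ext <| show (V.ρ s).comp (V.ρ t) = (V.ρ t).comp (V.ρ s) from by
    rw [← Module.End.mul_eq_comp, ← Module.End.mul_eq_comp, ← map_mul, ← map_mul, hc]⟩

theorem myEndo_exists_smul {S : Type} [Group S] (hc : ∀ a b : S, a * b = b * a)
    (V : FDRep ℂ S) [Simple V] (s : S) :
    ∃ c : ℂ, V.ρ s = c • LinearMap.id := by
  obtain ⟨c, hcs⟩ := CategoryTheory.endomorphism_simple_eq_smul_id ℂ (myEndo hc V s)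
  refine ⟨c, ?_⟩
  have := congrArg (fun f => f.hom.hom.hom) hcs
  exact this.symm.trans rfl

/-- A simple representation of a finite "commutative" group over `ℂ` has multiplicative
character (it is one-dimensional). -/
theorem simple_char_mul {S : Type} [Group S] [Fintype S] (hc : ∀ a b : S, a * b = b * a)
    (V : FDRep ℂ S) [Simple V] :
    (∀ a b : S, V.character (a*b) = V.character a * V.character b) ∧ V.character 1 = 1 := by
  have hα : ∀ s : S, ∃ c : ℂ, V.ρ s = c • LinearMap.id := myEndo_exists_smul hc V
  choose α hαs using hα
  set d := Module.finrank ℂ V with hd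
  have hnontriv : Nontrivial V := by
    by_contra h
    have hsub : Subsingleton V := not_nontrivial_iff_subsingleton.mp h
    refine CategoryTheory.id_nonzero V ?_
    apply Action.hom_ext
    apply FGModuleCat.hom_ext
    apply LinearMap.ext
    intro v
    exact @Subsingleton.elim _ hsub _ _
  have hchar : ∀ s : S, V.character s = α s * d := by
    intro s
    rw [FDRep.character, hαs s, map_smul, LinearMap.trace_id, smul_eq_mul]
  have hid : ∀ c c' : ℂ, c • (LinearMap.id : V →ₗ[ℂ] V) = c' • LinearMap.id → c = c' := by
    intro c c' h
    obtain ⟨v, hv⟩ := exists_ne (0 : V)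
    have := congrArg (fun f : V →ₗ[ℂ] V => f v) h
    simpa using (smul_left_injective ℂ hv) (by simpa using this)
  have hαmul : ∀ a b : S, α (a * b) = α a * α b := by
    intro a b
    apply hid
    rw [← hαs, map_mul, hαs, hαs]
    ext v
    simp [smul_smul, mul_comm]
  have hα1 : α 1 = 1 := by
    apply hid
    rw [← hαs, map_one]
    simp [Module.End.one_eq_id]
  have hinv : Invertible ((Fintype.card S : ℂ)) :=
      invertibleOfNonzero (by exact_mod_cast Fintype.card_ne_zero)
  have hd1 : d = 1 := by
    letI : Invertible ((Nat.card S : ℂ)) := by rw [Nat.card_eq_fintype_card]; exact hinv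
    have horth := @FDRep.char_orthonormal ℂ _ S _ _ _ _ V V _ _
    rw [if_pos ⟨Iso.refl V⟩] at horth
    have hsum : ∑ g : S, V.character g * V.character g⁻¹
        = (Nat.card S : ℂ) * (d:ℂ) ^ 2 := by
      rw [Finset.sum_congr rfl (fun s _ => by
        rw [hchar, hchar, show α s * d * (α s⁻¹ * d) = (α s * α s⁻¹) * (d:ℂ)^2 by ring,
          ← hαmul, mul_inv_cancel, hα1, one_mul])]
      simp [Finset.sum_const, mul_comm, Nat.card_eq_fintype_card]
    rw [hsum, inv_mul_cancel_left₀ (Nat.cast_ne_zero.mpr Nat.card_pos.ne')] at horth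
    have h2 : ((d ^ 2 : ℕ) : ℂ) = ((1 : ℕ) : ℂ) := by push_cast; exact horth
    have h3 := Nat.cast_injective (R := ℂ) h2
    nlinarith [h3, sq_nonneg (d - 1)]
  constructor
  · intro a b
    rw [hchar, hchar, hchar, hαmul, hd1]
    push_cast; ring
  · rw [hchar, hα1, hd1]; norm_num

/-- Sum of a multiplicative character over a finite group. -/
theorem sum_hom_cases {S : Type} [Group S] [Fintype S] (β : S → ℂ)
    (hmul : ∀ a b : S, β (a * b) = β a * β b) :
    (∀ s, β s = 1) ∨ (∑ s : S, β s) = 0 := by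
  by_cases h : ∀ s, β s = 1
  · exact Or.inl h
  · push_neg at h
    obtain ⟨t, ht⟩ := h
    right
    have key : β t * ∑ s : S, β s = ∑ s : S, β s := by
      rw [Finset.mul_sum]
      exact Fintype.sum_equiv (Equiv.mulLeft t) _ _ (fun s => by
        rw [← hmul]; rfl)
    have : (β t - 1) * ∑ s : S, β s = 0 := by rw [sub_mul, one_mul, key, sub_self]
    rcases mul_eq_zero.mp this with h' | h'
    · exact absurd (by linear_combination h') ht
    · exact h'

/-- commutation shuffle -/
theorem comm_shuffle {M : Type*} [Monoid M] {P Q a b Z : M}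
    (hQa : Q * a = a * Q) (hbZ : b * Z = Z * b) (hQZ : Q * Z = Z * Q) :
    Z * (P * Q) * (a * b) * Z = Z * P * a * (Z * Q * b) := by
  simp only [mul_assoc]
  congr 1
  congr 1
  rw [← mul_assoc Q a, hQa, mul_assoc]
  congr 1
  rw [hbZ, ← mul_assoc, hQZ, mul_assoc]


theorem orderOf_finRotate' (n : ℕ) (hn : 0 < n) : orderOf (finRotate n) = n := by
  rcases Nat.lt_or_ge n 2 with h | h
  · interval_cases n
    · simp [finRotate_one]; rfl
  · rw [← Equiv.Perm.lcm_cycleType, cycleType_finRotate_of_le h]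
    simp

theorem sign_finRotate_even (n : ℕ) (hn : 2 ∣ n) (hpos : 0 < n) :
    Equiv.Perm.sign (finRotate n) = -1 := by
  obtain ⟨p, rfl⟩ : ∃ p, n = p + 1 := ⟨n - 1, by omega⟩
  rw [sign_finRotate]
  exact Odd.neg_one_pow (by rw [Nat.odd_iff]; omega)

theorem odd_orderOf_sq (n : ℕ) (hn : 0 < n) (h4 : ¬ (4 ∣ n)) (y : Equiv.Perm (Fin n))
    (hy : y ^ 2 ∈ Subgroup.zpowers (finRotate n)) : Odd (orderOf (y ^ 2)) := by
  by_contra hodd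
  rw [Nat.not_odd_iff_even] at hodd
  obtain ⟨u, hu⟩ := hodd
  have htpos : 0 < orderOf (y ^ 2) := orderOf_pos _
  have hupos : 0 < u := by omega
  have hw2 : ((y ^ 2) ^ u) ^ 2 = 1 := by
    rw [← pow_mul]
    have h2 : u * 2 = orderOf (y ^ 2) := by omega
    rw [h2, pow_orderOf_eq_one]
  have hw1 : (y ^ 2) ^ u ≠ 1 := by
    intro h
    have h1 := orderOf_dvd_iff_pow_eq_one.mpr h
    have := Nat.le_of_dvd hupos h1
    omega
  have hsignw : Equiv.Perm.sign ((y ^ 2) ^ u) = 1 := by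
    have h : (y ^ 2) ^ u = (y ^ u) ^ 2 := by
      rw [← pow_mul, ← pow_mul, Nat.mul_comm]
    rw [h, map_pow, Int.units_sq]
  have hwH : (y ^ 2) ^ u ∈ Subgroup.zpowers (finRotate n) := pow_mem hy u
  have hfin : IsOfFinOrder (finRotate n) := isOfFinOrder_of_finite _
  obtain ⟨k, hk⟩ := hfin.mem_powers_iff_mem_zpowers.mpr hwH
  have hk' : finRotate n ^ k = (y ^ 2) ^ u := hk
  have hordc : orderOf (finRotate n) = n := orderOf_finRotate' n hn
  have hn2k : n ∣ 2 * k := by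
    rw [← hordc, orderOf_dvd_iff_pow_eq_one]
    calc (finRotate n) ^ (2 * k) = ((finRotate n) ^ k) ^ 2 := by rw [← pow_mul, Nat.mul_comm]
    _ = ((y ^ 2) ^ u) ^ 2 := by rw [hk']
    _ = 1 := hw2
  have hnk : ¬ n ∣ k := by
    intro h
    apply hw1
    rw [← hk']
    rw [← hordc] at h
    exact orderOf_dvd_iff_pow_eq_one.mp h
  have h2n : 2 ∣ n := by
    by_contra h2
    have hcop : Nat.Coprime n 2 := Odd.coprime_two_right (Nat.odd_iff.mpr (by omega))
    exact hnk (hcop.dvd_of_dvd_mul_left hn2k)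
  obtain ⟨m, hm⟩ := h2n
  have hmodd : Odd m := by rw [Nat.odd_iff]; omega
  have hmk : m ∣ k := by
    have : 2 * m ∣ 2 * k := hm ▸ hn2k
    exact (mul_dvd_mul_iff_left (by norm_num : (2:ℕ) ≠ 0)).mp this
  obtain ⟨k0, hk0⟩ := hmk
  have hk0odd : Odd k0 := by
    rw [Nat.odd_iff]
    by_contra h
    apply hnk
    obtain ⟨l, hl⟩ : 2 ∣ k0 := by omega
    exact ⟨l, by rw [hk0, hl, hm]; ring⟩
  have hkodd : Odd k := hk0 ▸ (Odd.mul hmodd hk0odd)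
  have hsignc : Equiv.Perm.sign (finRotate n) = -1 := sign_finRotate_even n ⟨m, hm⟩ hn
  have hcontr : Equiv.Perm.sign ((y ^ 2) ^ u) = -1 := by
    rw [← hk', map_pow, hsignc, Odd.neg_one_pow hkodd]
  rw [hsignw] at hcontr
  exact absurd hcontr (by decide)

end Aux

/-- Let `n > 0` not be divisible by `4` and let `C_n ⊆ S_n` be the cyclic subgroup of order
`n` generated by the `n`-cycle `(1 2 … n)` (formalized as `finRotate n`). Then every simple
object of `C(S_n, C_n)` has Frobenius–Schur indicator `0` or `1`. -/

theorem stmt_16 (n : ℕ) (hn : 0 < n) (h4 : ¬ (4 ∣ n)) (g : Equiv.Perm (Fin n)) :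
    ∀ (V : FDRep ℂ ↥(stabCoset (Subgroup.zpowers (finRotate n)) g)), Simple V →
      nuInd (Subgroup.zpowers (finRotate n)) g 2 V.character = 0 ∨
      nuInd (Subgroup.zpowers (finRotate n)) g 2 V.character = 1 := by
  set c : Equiv.Perm (Fin n) := finRotate n with hc
  set H : Subgroup (Equiv.Perm (Fin n)) := Subgroup.zpowers c with hH
  set S : Subgroup (Equiv.Perm (Fin n)) := stabCoset H g with hS
  intro V hV
  haveI := hV
  -- membership in the conjugate part
  have hmapmem : ∀ x : Equiv.Perm (Fin n),
      x ∈ Subgroup.map (MulAut.conj g).toMonoidHom H ↔ g⁻¹ * x * g ∈ H := by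
    intro x
    constructor
    · rintro ⟨h, hh, rfl⟩
      simpa [MulAut.conj_apply, mul_assoc] using hh
    · intro hx
      exact ⟨g⁻¹ * x * g, hx, by simp [MulAut.conj_apply, mul_assoc]⟩
  have hmemS : ∀ x : Equiv.Perm (Fin n), x ∈ S ↔ x ∈ H ∧ g⁻¹ * x * g ∈ H := by
    intro x
    rw [hS, stabCoset, Subgroup.mem_inf, hmapmem]
  -- H is commutative
  have hcomm : ∀ a b : Equiv.Perm (Fin n), a ∈ H → b ∈ H → a * b = b * a := by
    intro a b ha hb
    obtain ⟨i, hi⟩ := Subgroup.mem_zpowers_iff.mp ha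
    obtain ⟨j, hj⟩ := Subgroup.mem_zpowers_iff.mp hb
    rw [← hi, ← hj]
    exact (Commute.zpow_zpow_self c i j).eq
  have hmemH : ∀ s : ↥S, (s : Equiv.Perm (Fin n)) ∈ H := fun s => ((hmemS s).mp s.2).1
  -- key closure lemma
  have keyS : ∀ x : Equiv.Perm (Fin n), x ∈ H → (g * x) ^ 2 ∈ H → (g * x) ^ 2 ∈ S := by
    intro x hx h2
    rw [hmemS]
    refine ⟨h2, ?_⟩
    have e : g⁻¹ * (g * x) ^ 2 * g = x * (g * x) ^ 2 * x⁻¹ := by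
      simp [pow_two, mul_assoc]
    have e2 : x * (g * x) ^ 2 * x⁻¹ = (g * x) ^ 2 := by
      rw [hcomm x _ hx h2]
      simp [mul_assoc]
    rw [e, e2]
    exact h2
  by_cases hex : ∃ x₀ : Equiv.Perm (Fin n), x₀ ∈ H ∧ (g * x₀) ^ 2 ∈ H
  swap
  · -- empty case
    left
    rw [show nuInd H g 2 V.character = (Nat.card ↥S : ℂ)⁻¹ *
        ∑ x : Equiv.Perm (Fin n), (if h : x ∈ H ∧ (g * x) ^ 2 ∈ S
          then (starRingEnd ℂ) (V.character ⟨(g * x) ^ 2, h.2⟩) else 0) from by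
      unfold nuInd; rw [finsum_eq_sum_of_fintype]]
    rw [Finset.sum_eq_zero, mul_zero]
    intro x _
    rw [dif_neg]
    rintro ⟨h1, h2⟩
    exact hex ⟨x, h1, ((hmemS _).mp h2).1⟩
  obtain ⟨x₀, hx₀, hy2⟩ := hex
  set y : Equiv.Perm (Fin n) := g * x₀ with hy
  have hy2S : y ^ 2 ∈ S := keyS x₀ hx₀ hy2
  set Y : ↥S := ⟨y ^ 2, hy2S⟩ with hY
  have hψ : ∀ s : ↥S, y⁻¹ * (s : Equiv.Perm (Fin n)) * y ∈ H := by
    intro s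
    have h1 : g⁻¹ * (s : Equiv.Perm (Fin n)) * g ∈ H := ((hmemS _).mp s.2).2
    have e : y⁻¹ * (s : Equiv.Perm (Fin n)) * y
        = x₀⁻¹ * (g⁻¹ * (s : Equiv.Perm (Fin n)) * g) * x₀ := by
      rw [hy]; simp [mul_assoc]
    rw [e]
    exact mul_mem (mul_mem (inv_mem hx₀) h1) hx₀
  have hsqS : ∀ s : ↥S, (g * (x₀ * (s : Equiv.Perm (Fin n)))) ^ 2 ∈ S := by
    intro s
    apply keyS _ (mul_mem hx₀ (hmemH s))
    have e : (g * (x₀ * (s : Equiv.Perm (Fin n)))) ^ 2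
        = y ^ 2 * (y⁻¹ * (s : Equiv.Perm (Fin n)) * y) * (s : Equiv.Perm (Fin n)) := by
      rw [hy]; simp [pow_two, mul_assoc]
    rw [e]
    exact mul_mem (mul_mem hy2 (hψ s)) (hmemH s)
  set sq : ↥S → ↥S := fun s => ⟨(g * (x₀ * (s : Equiv.Perm (Fin n)))) ^ 2, hsqS s⟩ with hsq
  -- the coset description
  have hx_iff : ∀ x : Equiv.Perm (Fin n), (x ∈ H ∧ (g * x) ^ 2 ∈ S) →
      ∃ s : ↥S, x = x₀ * (s : Equiv.Perm (Fin n)) := by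
    rintro x ⟨hxH, hx2S⟩
    have hsH : x₀⁻¹ * x ∈ H := mul_mem (inv_mem hx₀) hxH
    have hsmap : g⁻¹ * (x₀⁻¹ * x) * g ∈ H := by
      have e : g⁻¹ * (x₀⁻¹ * x) * g = x₀ * ((g * x₀) ^ 2)⁻¹ * ((g * x) ^ 2) * x⁻¹ := by
        simp [pow_two, mul_assoc]
      rw [e]
      exact mul_mem (mul_mem (mul_mem hx₀ (inv_mem hy2)) ((hmemS _).mp hx2S).1) (inv_mem hxH)
    refine ⟨⟨x₀⁻¹ * x, (hmemS _).mpr ⟨hsH, hsmap⟩⟩, ?_⟩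
    show x = x₀ * (x₀⁻¹ * x)
    rw [mul_inv_cancel_left]
  -- commutativity of S
  have hcS : ∀ a b : ↥S, a * b = b * a := fun a b =>
    Subtype.ext (hcomm _ _ (hmemH a) (hmemH b))
  obtain ⟨hmul, h1⟩ := simple_char_mul hcS V
  set χ : ↥S → ℂ := V.character with hχ
  set cc : ℂ →+* ℂ := (starRingEnd ℂ) with hcc
  set β : ↥S → ℂ := fun s => cc (χ (Y⁻¹ * sq s)) with hβ
  -- the group-level relation
  have hrel : ∀ s t : ↥S, sq (s * t) * Y = sq s * sq t := by
    intro s t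
    apply Subtype.ext
    show (g * (x₀ * ((s : Equiv.Perm (Fin n)) * (t : Equiv.Perm (Fin n))))) ^ 2 * y ^ 2
        = (g * (x₀ * (s : Equiv.Perm (Fin n)))) ^ 2 * (g * (x₀ * (t : Equiv.Perm (Fin n)))) ^ 2
    set a := (s : Equiv.Perm (Fin n)) with ha
    set b := (t : Equiv.Perm (Fin n)) with hb
    have eab : (g * (x₀ * (a * b))) ^ 2
        = y ^ 2 * ((y⁻¹ * a * y) * (y⁻¹ * b * y)) * (a * b) := by
      rw [hy]; simp [pow_two, mul_assoc]
    have ea : (g * (x₀ * a)) ^ 2 = y ^ 2 * (y⁻¹ * a * y) * a := by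
      rw [hy]; simp [pow_two, mul_assoc]
    have eb : (g * (x₀ * b)) ^ 2 = y ^ 2 * (y⁻¹ * b * y) * b := by
      rw [hy]; simp [pow_two, mul_assoc]
    rw [eab, ea, eb]
    exact comm_shuffle (hcomm _ _ (hψ t) (hmemH s)) (hcomm _ _ (hmemH t) hy2)
      (hcomm _ _ (hψ t) hy2)
  have hβmul : ∀ s t : ↥S, β (s * t) = β s * β t := by
    intro s t
    have harg : Y⁻¹ * sq (s * t) = (Y⁻¹ * sq s) * (Y⁻¹ * sq t) := by
      rw [eq_mul_inv_of_mul_eq (hrel s t)]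
      simp only [mul_assoc]
      congr 1
      congr 1
      exact hcS _ _
    show cc (χ (Y⁻¹ * sq (s * t))) = cc (χ (Y⁻¹ * sq s)) * cc (χ (Y⁻¹ * sq t))
    rw [harg, hmul, map_mul]
  have hcoset : ∀ s : ↥S, (x₀ * (s : Equiv.Perm (Fin n)) ∈ H ∧
      (g * (x₀ * (s : Equiv.Perm (Fin n)))) ^ 2 ∈ S) := fun s =>
    ⟨mul_mem hx₀ (hmemH s), hsqS s⟩
  have hterm : ∀ s : ↥S, (if h : x₀ * (s : Equiv.Perm (Fin n)) ∈ H ∧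
        (g * (x₀ * (s : Equiv.Perm (Fin n)))) ^ 2 ∈ S
      then cc (χ ⟨(g * (x₀ * (s : Equiv.Perm (Fin n)))) ^ 2, h.2⟩) else 0)
      = cc (χ Y) * β s := by
    intro s
    rw [dif_pos (hcoset s)]
    show cc (χ (sq s)) = cc (χ Y) * β s
    rw [← mul_inv_cancel_left Y (sq s), hmul, map_mul]
  have hsum1 : (∑ x : Equiv.Perm (Fin n), if h : x ∈ H ∧ (g * x) ^ 2 ∈ S
        then cc (χ ⟨(g * x) ^ 2, h.2⟩) else 0)
      = cc (χ Y) * ∑ s : ↥S, β s := by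
    rw [Finset.mul_sum]
    calc (∑ x : Equiv.Perm (Fin n), if h : x ∈ H ∧ (g * x) ^ 2 ∈ S
          then cc (χ ⟨(g * x) ^ 2, h.2⟩) else 0)
        = ∑ x ∈ Finset.univ.image (fun s : ↥S => x₀ * (s : Equiv.Perm (Fin n))),
          (if h : x ∈ H ∧ (g * x) ^ 2 ∈ S then cc (χ ⟨(g * x) ^ 2, h.2⟩) else 0) := by
          refine (Finset.sum_subset (Finset.subset_univ _) ?_).symm
          intro x _ hx
          rw [dif_neg]
          intro hcond
          obtain ⟨s, hs⟩ := hx_iff x hcond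
          exact hx (Finset.mem_image.mpr ⟨s, Finset.mem_univ _, hs.symm⟩)
      _ = ∑ s : ↥S, (if h : x₀ * (s : Equiv.Perm (Fin n)) ∈ H ∧
            (g * (x₀ * (s : Equiv.Perm (Fin n)))) ^ 2 ∈ S
          then cc (χ ⟨(g * (x₀ * (s : Equiv.Perm (Fin n)))) ^ 2, h.2⟩) else 0) := by
          apply Finset.sum_image
          intro s _ t _ hst
          exact Subtype.ext (mul_left_cancel hst)
      _ = ∑ s : ↥S, cc (χ Y) * β s := Finset.sum_congr rfl (fun s _ => hterm s)
  rw [show nuInd H g 2 V.character = (Nat.card ↥S : ℂ)⁻¹ *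
      ∑ x : Equiv.Perm (Fin n), (if h : x ∈ H ∧ (g * x) ^ 2 ∈ S
        then cc (χ ⟨(g * x) ^ 2, h.2⟩) else 0) from by
    unfold nuInd; rw [finsum_eq_sum_of_fintype]]
  rw [hsum1]
  have hcard : (Nat.card ↥S : ℂ) ≠ 0 := by
    rw [Nat.card_eq_fintype_card]
    exact_mod_cast Fintype.card_ne_zero
  rcases sum_hom_cases β hβmul with hall | h0
  swap
  · left
    rw [h0, mul_zero, mul_zero]
  · right
    have hsumβ : ∑ s : ↥S, β s = (Nat.card ↥S : ℂ) := by
      rw [Finset.sum_congr rfl (fun s _ => hall s)]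
      simp [Nat.card_eq_fintype_card]
    rw [hsumβ]
    have hpow : ∀ (k : ℕ) (u : ↥S), χ (u ^ k) = χ u ^ k := by
      intro k
      induction k with
      | zero => intro u; simpa using h1
      | succ m ih => intro u; rw [pow_succ, pow_succ, hmul, ih]
    have hYt : χ Y ^ orderOf (y ^ 2) = 1 := by
      rw [← hpow]
      have hYe : Y ^ orderOf (y ^ 2) = 1 := by
        apply Subtype.ext
        show (y ^ 2) ^ orderOf (y ^ 2) = 1
        exact pow_orderOf_eq_one _
      rw [hYe, h1]
    have hY2 : χ Y ^ 2 = 1 := by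
      have hYY : Y⁻¹ * sq Y = Y * Y := by
        apply Subtype.ext
        show (y ^ 2)⁻¹ * (g * (x₀ * (y ^ 2))) ^ 2 = y ^ 2 * y ^ 2
        rw [hy]; simp [pow_two, mul_assoc]
      have hβY := hall Y
      have hβY' : cc (χ (Y * Y)) = 1 := by rw [← hYY]; exact hβY
      have h2 := congrArg (starRingEnd ℂ) hβY'
      rw [map_one] at h2
      have h3 : χ (Y * Y) = 1 := by
        rw [← Complex.conj_conj (χ (Y * Y))]
        exact h2
      rw [pow_two, ← hmul]
      exact h3
    obtain ⟨u, hu⟩ := odd_orderOf_sq n hn h4 y hy2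
    have hχY : χ Y = 1 := by
      have h3 : χ Y = χ Y ^ orderOf (y ^ 2) := by
        rw [hu, pow_succ, pow_mul, hY2, one_pow, one_mul]
      rw [h3, hYt]
    rw [hχY, map_one, one_mul, inv_mul_cancel₀ hcard]
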